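/- Let H be a real Hilbert space, let I be a nonempty finite index set and, for every i ∈ I, let G_i be a real Hilbert space, let V_i be a closed linear subspace of G_i, let r_i ∈ G_i, let L_i : H → G_i be a nonzero bounded linear operator, and let α_i > 0. Define h : H → ℝ by h(x) = (1/2) Σ_{i∈I} α_i d_{V_i}(L_i x − r_i)². Let γ > 0 and x ∈ H. Then prox_{γh} x is the unique point p ∈ H satisfying p + γ Σ_{i∈I} α_i L_i*( proj_{V_i^⊥}(L_i p) ) = x + γ Σ_{i∈I} α_i L_i*( proj_{V_i^⊥} r_i ). -/

import Mathlib

open scoped RealInnerProductSpace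

section Aux

variable {E : Type*} [NormedAddCommGroup E] [InnerProductSpace ℝ E]

lemma aux_infDist (K : Submodule ℝ E) [Submodule.HasOrthogonalProjection K] (z : E) :
    Metric.infDist z (K : Set E) = ‖(Submodule.orthogonalProjectionOnto Kᗮ z : E)‖ := by
  rw [Metric.infDist_eq_iInf, ← Submodule.starProjection_apply,
    Submodule.starProjection_orthogonal_val, Submodule.starProjection_minimal]
  congr 1
  ext v
  rw [dist_eq_norm]

lemma aux_inner_self (K : Submodule ℝ E) [Submodule.HasOrthogonalProjection K] (z : E) :
    ⟪(Submodule.orthogonalProjectionOnto K z : E), z⟫ = ‖(Submodule.orthogonalProjectionOnto K z : E)‖ ^ 2 := by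
  have h0 : ⟪z - (Submodule.orthogonalProjectionOnto K z : E), (Submodule.orthogonalProjectionOnto K z : E)⟫ = 0 :=
    Submodule.starProjection_inner_eq_zero z _ (Submodule.orthogonalProjectionOnto K z).2
  rw [inner_sub_left] at h0
  rw [real_inner_comm, ← real_inner_self_eq_norm_sq]
  linarith

lemma aux_inner_mem (K : Submodule ℝ E) [Submodule.HasOrthogonalProjection K] {a : E} (ha : a ∈ K)
    (w : E) : ⟪a, (Submodule.orthogonalProjectionOnto K w : E)⟫ = ⟪a, w⟫ := by
  have h0 : ⟪w - (Submodule.orthogonalProjectionOnto K w : E), a⟫ = 0 :=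
    Submodule.starProjection_inner_eq_zero w a ha
  rw [inner_sub_left] at h0
  have h1 : ⟪a, (Submodule.orthogonalProjectionOnto K w : E)⟫ = ⟪(Submodule.orthogonalProjectionOnto K w : E), a⟫ :=
    real_inner_comm _ _
  have h2 : ⟪a, w⟫ = ⟪w, a⟫ := real_inner_comm _ _
  linarith

end Aux

set_option maxHeartbeats 2000000 in
/-- In the setting of Example 2.2 of the paper, for `γ > 0` and `x ∈ H`,
the proximal point `prox_{γh} x` (i.e. the minimizer `p` of `y ↦ γ h(y) + ½‖x − y‖²`)
is the unique point `p` satisfying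
`p + γ ∑ i α i • L i*(proj_{(V i)ᗮ}(L i p)) = x + γ ∑ i α i • L i*(proj_{(V i)ᗮ} (r i))`. -/
theorem stmt_1 {H : Type*} [NormedAddCommGroup H] [InnerProductSpace ℝ H] [CompleteSpace H]
    {ι : Type*} [Fintype ι] [Nonempty ι]
    (G : ι → Type*) [∀ i, NormedAddCommGroup (G i)] [∀ i, InnerProductSpace ℝ (G i)]
    [∀ i, CompleteSpace (G i)]
    (V : ∀ i, Submodule ℝ (G i)) (hVclosed : ∀ i, IsClosed (V i : Set (G i)))
    [∀ i, CompleteSpace (V i)]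
    (r : ∀ i, G i) (L : ∀ i, H →L[ℝ] G i) (hL : ∀ i, L i ≠ 0)
    (α : ι → ℝ) (hα : ∀ i, 0 < α i)
    (h : H → ℝ)
    (hdef : ∀ x, h x =
      (1 / 2) * ∑ i, α i * (Metric.infDist (L i x - r i) (V i : Set (G i))) ^ 2)
    (γ : ℝ) (hγ : 0 < γ) (x : H)
    (p : H)
    (hp : ∀ y, γ * h p + ‖x - p‖ ^ 2 / 2 ≤ γ * h y + ‖x - y‖ ^ 2 / 2) :
    (p + γ • ∑ i, α i • ContinuousLinearMap.adjoint (L i)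
        ((Submodule.orthogonalProjectionOnto (V i)ᗮ (L i p) : G i))
      = x + γ • ∑ i, α i • ContinuousLinearMap.adjoint (L i)
        ((Submodule.orthogonalProjectionOnto (V i)ᗮ (r i) : G i))) ∧
    (∀ q : H, q + γ • ∑ i, α i • ContinuousLinearMap.adjoint (L i)
        ((Submodule.orthogonalProjectionOnto (V i)ᗮ (L i q) : G i))
      = x + γ • ∑ i, α i • ContinuousLinearMap.adjoint (L i)
        ((Submodule.orthogonalProjectionOnto (V i)ᗮ (r i) : G i)) → q = p) := by
  classical
  -- abbreviation for the (coerced) orthogonal projection onto `(V i)ᗮ`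
  set P : ∀ i, G i → G i := fun i z => (Submodule.orthogonalProjectionOnto (V i)ᗮ z : G i) with hPdef
  have hP : ∀ i (z : G i), P i z = (Submodule.orthogonalProjectionOnto (V i)ᗮ z : G i) := fun _ _ => rfl
  have hPmem : ∀ i (z : G i), P i z ∈ (V i)ᗮ := fun i z => (Submodule.orthogonalProjectionOnto (V i)ᗮ z).2
  have hPsub : ∀ i (y z : G i), P i (y - z) = P i y - P i z := by
    intro i y z; simp only [hPdef, map_sub, Submodule.coe_sub]
  have hPadd : ∀ i (y z : G i), P i (y + z) = P i y + P i z := by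
    intro i y z; simp only [hPdef, map_add, Submodule.coe_add]
  have hPsmul : ∀ i (t : ℝ) (z : G i), P i (t • z) = t • P i z := by
    intro i t z; simp only [hPdef, map_smul, Submodule.coe_smul]
  -- rewrite h using the projections
  have hh : ∀ y, h y = (1 / 2) * ∑ i, α i * ‖P i (L i y) - P i (r i)‖ ^ 2 := by
    intro y
    rw [hdef]
    congr 1
    refine Finset.sum_congr rfl fun i _ => ?_
    rw [aux_infDist (V i) (L i y - r i), ← hP, hPsub]
  set a : ∀ i, G i := fun i => P i (L i p) - P i (r i) with hadef
  have hamem : ∀ i, a i ∈ (V i)ᗮ := fun i => sub_mem (hPmem i _) (hPmem i _)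
  -- the variational inequality: the "gradient" vanishes
  have key : ∀ d : H, ⟪x - p, d⟫ = γ * ∑ i, α i * ⟪a i, L i d⟫ := by
    intro d
    set c : ℝ := γ * ∑ i, α i * ⟪a i, P i (L i d)⟫ - ⟪x - p, d⟫ with hc
    set C : ℝ := γ * ((1 / 2) * ∑ i, α i * ‖P i (L i d)‖ ^ 2) + ‖d‖ ^ 2 / 2 with hC
    have hsum0 : 0 ≤ ∑ i, α i * ‖P i (L i d)‖ ^ 2 :=
      Finset.sum_nonneg fun i _ => mul_nonneg (hα i).le (by positivity)
    have hC0 : 0 ≤ C := by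
      have := hγ.le
      have := sq_nonneg ‖d‖
      rw [hC]; nlinarith
    have hkey : ∀ t : ℝ, 0 ≤ t * c + t ^ 2 * C := by
      intro t
      have h1 := hp (p + t • d)
      have hexp : h (p + t • d)
          = h p + t * (∑ i, α i * ⟪a i, P i (L i d)⟫)
            + t ^ 2 * ((1 / 2) * ∑ i, α i * ‖P i (L i d)‖ ^ 2) := by
        rw [hh, hh]
        have hterm : ∀ i : ι, α i * ‖P i (L i (p + t • d)) - P i (r i)‖ ^ 2
            = α i * ‖a i‖ ^ 2 + t * (2 * (α i * ⟪a i, P i (L i d)⟫))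
              + t ^ 2 * (α i * ‖P i (L i d)‖ ^ 2) := by
          intro i
          have hv : P i (L i (p + t • d)) - P i (r i) = a i + t • P i (L i d) := by
            rw [map_add, map_smul, hPadd, hPsmul, hadef]
            exact add_sub_right_comm _ _ _
          rw [hv, norm_add_sq_real, real_inner_smul_right, norm_smul,
            Real.norm_eq_abs, mul_pow, sq_abs]
          ring
        rw [Finset.sum_congr rfl fun i _ => hterm i, Finset.sum_add_distrib,
          Finset.sum_add_distrib]
        simp only [← Finset.mul_sum]
        have haa : ∀ i : ι, P i ((L i) p) - P i (r i) = a i := fun i => rfl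
        simp only [haa]
        ring
      have hnorm : ‖x - (p + t • d)‖ ^ 2
          = ‖x - p‖ ^ 2 - 2 * t * ⟪x - p, d⟫ + t ^ 2 * ‖d‖ ^ 2 := by
        have hv : x - (p + t • d) = (x - p) - t • d := by abel
        rw [hv, norm_sub_sq_real, real_inner_smul_right, norm_smul, Real.norm_eq_abs,
          mul_pow, sq_abs]
        ring
      rw [hexp, hnorm] at h1
      rw [hc, hC]
      nlinarith [h1]
    have hc0 : c = 0 := by
      by_contra hne
      have h2C : 0 < 2 * C + 1 := by linarith
      have ht := hkey (-(c / (2 * C + 1)))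
      have hcsq : 0 < c ^ 2 := by positivity
      rw [neg_mul, neg_pow, div_pow] at ht
      have hexp2 : -(c / (2 * C + 1) * c) + (-1) ^ 2 * (c ^ 2 / (2 * C + 1) ^ 2) * C
          = -(c ^ 2 * (C + 1)) / (2 * C + 1) ^ 2 := by
        field_simp
        ring
      rw [hexp2] at ht
      have : -(c ^ 2 * (C + 1)) / (2 * C + 1) ^ 2 < 0 := by
        apply div_neg_of_neg_of_pos
        · nlinarith
        · positivity
      linarith
    have : γ * ∑ i, α i * ⟪a i, P i (L i d)⟫ = ⟪x - p, d⟫ := by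
      rw [hc] at hc0; linarith
    rw [← this]
    congr 1
    refine Finset.sum_congr rfl fun i _ => ?_
    rw [hP, aux_inner_mem _ (hamem i)]
  -- turn the variational inequality into the stated equation
  have key2 : x - p = γ • ∑ i, α i • ContinuousLinearMap.adjoint (L i) (a i) := by
    set w : H := x - p - γ • ∑ i, α i • ContinuousLinearMap.adjoint (L i) (a i) with hw
    have hinner : ∀ d : H, ⟪w, d⟫ = 0 := by
      intro d
      rw [hw, inner_sub_left, real_inner_smul_left, sum_inner]
      have : ∀ i ∈ Finset.univ, ⟪α i • ContinuousLinearMap.adjoint (L i) (a i), d⟫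
          = α i * ⟪a i, L i d⟫ := by
        intro i _
        rw [real_inner_smul_left, ContinuousLinearMap.adjoint_inner_left]
      rw [Finset.sum_congr rfl this, key d]
      ring
    have hw0 : w = 0 := inner_self_eq_zero.mp (hinner w)
    rw [hw] at hw0
    exact sub_eq_zero.mp hw0
  -- split the sum
  have hsplit : ∑ i, α i • ContinuousLinearMap.adjoint (L i) (a i)
      = (∑ i, α i • ContinuousLinearMap.adjoint (L i) (P i (L i p)))
        - ∑ i, α i • ContinuousLinearMap.adjoint (L i) (P i (r i)) := by
    rw [← Finset.sum_sub_distrib]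
    refine Finset.sum_congr rfl fun i _ => ?_
    rw [hadef]
    simp [map_sub, smul_sub]
  -- the equation for p, in terms of P
  have part1 : p + γ • ∑ i, α i • ContinuousLinearMap.adjoint (L i) (P i (L i p))
      = x + γ • ∑ i, α i • ContinuousLinearMap.adjoint (L i) (P i (r i)) := by
    have h3 : x - p = γ • ∑ i, α i • ContinuousLinearMap.adjoint (L i) (P i (L i p))
        - γ • ∑ i, α i • ContinuousLinearMap.adjoint (L i) (P i (r i)) := by
      rw [key2, hsplit, smul_sub]
    have h4 : x = p + (γ • ∑ i, α i • ContinuousLinearMap.adjoint (L i) (P i (L i p))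
        - γ • ∑ i, α i • ContinuousLinearMap.adjoint (L i) (P i (r i))) := by
      rw [← h3]; abel
    rw [h4]; abel
  constructor
  · simpa only [hP] using part1
  · intro q hq
    simp only [← hP] at hq
    have hS : ∑ i, α i • ContinuousLinearMap.adjoint (L i) (P i (L i (q - p)))
        = (∑ i, α i • ContinuousLinearMap.adjoint (L i) (P i (L i q)))
          - ∑ i, α i • ContinuousLinearMap.adjoint (L i) (P i (L i p)) := by
      rw [← Finset.sum_sub_distrib]
      refine Finset.sum_congr rfl fun i _ => ?_
      rw [map_sub, hPsub, map_sub, smul_sub]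
    have hdiff : (q - p) + γ • ∑ i, α i • ContinuousLinearMap.adjoint (L i)
        (P i (L i (q - p))) = 0 := by
      have h0 : (q + γ • ∑ i, α i • ContinuousLinearMap.adjoint (L i) (P i (L i q)))
          - (p + γ • ∑ i, α i • ContinuousLinearMap.adjoint (L i) (P i (L i p))) = 0 := by
        rw [hq, part1, sub_self]
      rw [hS, smul_sub]
      rw [show (q - p) + (γ • ∑ i, α i • ContinuousLinearMap.adjoint (L i) (P i (L i q))
          - γ • ∑ i, α i • ContinuousLinearMap.adjoint (L i) (P i (L i p)))
          = (q + γ • ∑ i, α i • ContinuousLinearMap.adjoint (L i) (P i (L i q)))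
            - (p + γ • ∑ i, α i • ContinuousLinearMap.adjoint (L i) (P i (L i p))) from by abel]
      exact h0
    set e : H := q - p with he
    have hzero : ⟪e + γ • ∑ i, α i • ContinuousLinearMap.adjoint (L i) (P i (L i e)), e⟫
        = 0 := by
      rw [hdiff, inner_zero_left]
    rw [inner_add_left, real_inner_smul_left, sum_inner] at hzero
    have hterm : ∀ i ∈ Finset.univ,
        ⟪α i • ContinuousLinearMap.adjoint (L i) (P i (L i e)), e⟫
          = α i * ‖P i (L i e)‖ ^ 2 := by
      intro i _
      rw [real_inner_smul_left, ContinuousLinearMap.adjoint_inner_left, hP,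
        aux_inner_self]
    rw [Finset.sum_congr rfl hterm] at hzero
    have hnn : 0 ≤ ∑ i, α i * ‖P i (L i e)‖ ^ 2 :=
      Finset.sum_nonneg fun i _ => mul_nonneg (hα i).le (by positivity)
    have he0 : ⟪e, e⟫ = 0 := by
      have h5 : (0 : ℝ) ≤ ⟪e, e⟫ := real_inner_self_nonneg
      nlinarith
    have : e = 0 := inner_self_eq_zero.mp he0
    rw [he] at this
    exact sub_eq_zero.mp this
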